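/- Let $\Delta, \epsilon > 0$ with $\Delta \geq \epsilon$, and let $T$ be an integer with $T \geq \frac{6}{\Delta^2}\log\left(\frac{e^6 \Delta}{\epsilon}\right)$ (so in particular $T \geq 36/\Delta^2$). Then for any real $\gamma$ with $\gamma \leq \Delta/4$, $\int_{\gamma - \Delta + \epsilon}^{\infty} \exp\left(-\frac{T}{3}\left(v^2 - (\gamma - \Delta)^2\right)\right) dv \geq e^{T\Delta^2/6} \cdot \frac{2}{\Delta T}$. -/

import Mathlib

open MeasureTheory Set Filter Real

lemma gauss_tail (c x : ℝ) (hc : 0 < c) (hx : 0 < x) :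
    1/(2*c*x) * (1 - 1/(2*c*x^2)) * Real.exp (-c*x^2)
      ≤ ∫ v in Set.Ioi x, Real.exp (-c*v^2) := by
  set h : ℝ → ℝ := fun v => (1/(2*c) * v⁻¹ - 1/(4*c^2) * (v^3)⁻¹) * Real.exp (-c*v^2) with hh
  set h' : ℝ → ℝ := fun v => (3/(4*c^2*v^4) - 1) * Real.exp (-c*v^2) with hh'
  have hc0 : c ≠ 0 := hc.ne'
  have hderiv : ∀ v ∈ Set.Ici x, HasDerivAt h (h' v) v := by
    intro v hv
    have hv0 : v ≠ 0 := (lt_of_lt_of_le hx hv).ne'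
    have e1 : HasDerivAt (fun v : ℝ => Real.exp (-c*v^2)) ((-c*(2*v)) * Real.exp (-c*v^2)) v := by
      have : HasDerivAt (fun v : ℝ => -c*v^2) (-c*(2*v)) v := by
        simpa using ((hasDerivAt_pow 2 v).const_mul (-c))
      simpa [mul_comm] using this.exp
    have e2 : HasDerivAt (fun v : ℝ => 1/(2*c) * v⁻¹ - 1/(4*c^2) * (v^3)⁻¹)
        (1/(2*c) * (-(v^2)⁻¹) - 1/(4*c^2) * (-(3*v^2) / (v^3)^2)) v := by
      exact ((hasDerivAt_inv hv0).const_mul _).sub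
        ((((hasDerivAt_pow 3 v).inv (pow_ne_zero 3 hv0)).const_mul _).congr_deriv (by ring_nf))
    have := e2.mul e1
    refine (this.congr_deriv ?_ : HasDerivAt h _ v)
    show _ = (3/(4*c^2*v^4) - 1) * Real.exp (-c*v^2)
    field_simp
    ring
  have hint : IntegrableOn (fun v => Real.exp (-c*v^2)) (Set.Ioi x) :=
    (integrable_exp_neg_mul_sq hc).integrableOn
  have h'int : IntegrableOn h' (Set.Ioi x) := by
    have hmeas : AEStronglyMeasurable h' (volume.restrict (Set.Ioi x)) := by
      apply ContinuousOn.aestronglyMeasurable _ measurableSet_Ioi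
      intro v hv
      have hv0 : v ≠ 0 := (hx.trans hv).ne'
      exact ((continuousAt_const.div (by fun_prop) (by positivity)).sub
        continuousAt_const).mul (by fun_prop) |>.continuousWithinAt
    refine ((hint.const_mul (3/(4*c^2*x^4) + 1)).mono hmeas ?_)
    filter_upwards [ae_restrict_mem measurableSet_Ioi] with v hv
    have hvx : x < v := hv
    have h1 : (0:ℝ) < v := hx.trans hvx
    rw [Real.norm_eq_abs, Real.norm_eq_abs, abs_mul, abs_of_pos (Real.exp_pos _)]
    rw [abs_of_pos (by positivity : (0:ℝ) < (3/(4*c^2*x^4) + 1) * Real.exp (-c*v^2))]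
    apply mul_le_mul_of_nonneg_right _ (Real.exp_pos _).le
    have hx4 : x^4 ≤ v^4 := pow_le_pow_left₀ hx.le hvx.le 4
    have hd : 3/(4*c^2*v^4) ≤ 3/(4*c^2*x^4) := by
      apply div_le_div_of_nonneg_left (by norm_num) (by positivity)
      nlinarith [sq_nonneg c]
    have hd0 : (0:ℝ) ≤ 3/(4*c^2*v^4) := by positivity
    rw [abs_le]
    constructor <;> nlinarith
  have htend : Tendsto h atTop (nhds 0) := by
    have t2 : Tendsto (fun v : ℝ => Real.exp (-c*v^2)) atTop (nhds 0) := by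
      have h1 : Tendsto (fun v:ℝ => -c*v^2) atTop atBot := by
        have h0 : Tendsto (fun x:ℝ => c * x^2) atTop atTop :=
          (tendsto_pow_atTop two_ne_zero).const_mul_atTop hc
        have h2 := tendsto_neg_atTop_atBot.comp h0
        simpa [Function.comp_def, neg_mul] using h2
      have := Real.tendsto_exp_atBot.comp h1
      simpa [Function.comp_def] using this
    have t1 : Tendsto (fun v : ℝ => 1/(2*c) * v⁻¹ - 1/(4*c^2) * (v^3)⁻¹) atTop (nhds 0) := by
      have h0 : Tendsto (fun v:ℝ => (v^3)⁻¹) atTop (nhds 0) := by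
        have h3 : Tendsto (fun v:ℝ => v^3) atTop atTop := tendsto_pow_atTop (by norm_num)
        have := tendsto_inv_atTop_zero.comp h3
        simpa [Function.comp_def] using this
      have h2 := h0.const_mul (1/(4*c^2))
      have h1 := tendsto_inv_atTop_zero.const_mul (1/(2*c))
      simpa using h1.sub h2
    rw [hh]
    simpa using t1.mul t2
  have key : ∫ v in Set.Ioi x, h' v = 0 - h x :=
    integral_Ioi_of_hasDerivAt_of_tendsto' hderiv h'int htend
  have hmono : ∫ v in Set.Ioi x, (-(h' v)) ≤ ∫ v in Set.Ioi x, Real.exp (-c*v^2) := by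
    apply setIntegral_mono_on h'int.neg hint measurableSet_Ioi
    intro v hv
    have h1 : (0:ℝ) < v := hx.trans hv
    have hd0 : (0:ℝ) ≤ 3/(4*c^2*v^4) := by positivity
    have hE := Real.exp_pos (-c*v^2)
    show -((3/(4*c^2*v^4) - 1) * Real.exp (-c*v^2)) ≤ Real.exp (-c*v^2)
    nlinarith
  rw [integral_neg, key, neg_sub, sub_zero] at hmono
  have heq : h x = 1/(2*c*x) * (1 - 1/(2*c*x^2)) * Real.exp (-c*x^2) := by
    show (1/(2*c) * x⁻¹ - 1/(4*c^2) * (x^3)⁻¹) * Real.exp (-c*x^2) = _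
    have hx0 : x ≠ 0 := hx.ne'
    have : (1/(2*c) * x⁻¹ - 1/(4*c^2) * (x^3)⁻¹) = 1/(2*c*x) * (1 - 1/(2*c*x^2)) := by
      field_simp
      ring
    rw [this]
  rw [heq] at hmono
  exact hmono

theorem stmt_14 (Δ ε : ℝ) (hε : 0 < ε) (hΔε : ε ≤ Δ) (T : ℕ)
    (hT : 6 / Δ ^ 2 * Real.log (Real.exp 6 * Δ / ε) ≤ (T : ℝ))
    (γ : ℝ) (hγ : γ ≤ Δ / 4) :
    ∫ v in Set.Ioi (γ - Δ + ε),
        Real.exp (-((T : ℝ) / 3) * (v ^ 2 - (γ - Δ) ^ 2))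
      ≥ Real.exp ((T : ℝ) * Δ ^ 2 / 6) * (2 / (Δ * T)) := by
  have hΔ : 0 < Δ := lt_of_lt_of_le hε hΔε
  -- T * Δ^2 ≥ 36
  have hlog : (6:ℝ) ≤ Real.log (Real.exp 6 * Δ / ε) := by
    have h1 : Real.exp 6 ≤ Real.exp 6 * Δ / ε := by
      rw [le_div_iff₀ hε]
      nlinarith [Real.exp_pos (6:ℝ)]
    calc (6:ℝ) = Real.log (Real.exp 6) := (Real.log_exp 6).symm
      _ ≤ Real.log (Real.exp 6 * Δ / ε) := Real.log_le_log (Real.exp_pos 6) h1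
  have hT36 : 36 / Δ^2 ≤ (T:ℝ) := by
    have := mul_le_mul_of_nonneg_left hlog (by positivity : (0:ℝ) ≤ 6/Δ^2)
    calc (36:ℝ)/Δ^2 = 6/Δ^2 * 6 := by ring
      _ ≤ 6/Δ^2 * Real.log (Real.exp 6 * Δ / ε) := this
      _ ≤ (T:ℝ) := hT
  have hTpos : (0:ℝ) < T := lt_of_lt_of_le (by positivity) hT36
  have hTΔ : (36:ℝ) ≤ (T:ℝ) * Δ^2 := by
    rw [div_le_iff₀ (by positivity)] at hT36
    linarith
  set c : ℝ := (T:ℝ)/3 with hc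
  set x : ℝ := Δ/4 with hx
  have hcpos : 0 < c := by positivity
  have hxpos : 0 < x := by positivity
  have hax : γ - Δ + ε ≤ x := by rw [hx]; linarith
  set K : ℝ := ((T:ℝ)/3)*(γ-Δ)^2 with hK
  -- rewrite the integrand
  have hrw : (∫ v in Set.Ioi (γ - Δ + ε),
        Real.exp (-((T : ℝ) / 3) * (v ^ 2 - (γ - Δ) ^ 2)))
      = Real.exp K * ∫ v in Set.Ioi (γ - Δ + ε), Real.exp (-c*v^2) := by
    rw [← MeasureTheory.integral_const_mul]
    apply MeasureTheory.setIntegral_congr_fun measurableSet_Ioi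
    intro v _
    show Real.exp (-((T : ℝ) / 3) * (v ^ 2 - (γ - Δ) ^ 2)) = Real.exp K * Real.exp (-c*v^2)
    rw [← Real.exp_add]
    congr 1
    rw [hK, hc]
    ring
  rw [hrw, ge_iff_le]
  have hint : MeasureTheory.IntegrableOn (fun v => Real.exp (-c*v^2)) (Set.Ioi (γ - Δ + ε)) :=
    (integrable_exp_neg_mul_sq hcpos).integrableOn
  have hmono : (∫ v in Set.Ioi x, Real.exp (-c*v^2))
      ≤ ∫ v in Set.Ioi (γ - Δ + ε), Real.exp (-c*v^2) := by
    apply MeasureTheory.setIntegral_mono_set hint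
    · filter_upwards with v using (Real.exp_pos _).le
    · exact HasSubset.Subset.eventuallyLE (Set.Ioi_subset_Ioi hax)
  have htail := gauss_tail c x hcpos hxpos
  -- coefficient bound
  have hcoeff : 2/(Δ*(T:ℝ)) ≤ 1/(2*c*x) * (1 - 1/(2*c*x^2)) := by
    have e1 : 1/(2*c*x) = 6/((T:ℝ)*Δ) := by rw [hc, hx]; field_simp; ring
    have e2 : 1/(2*c*x^2) = 24/((T:ℝ)*Δ^2) := by rw [hc, hx]; field_simp; ring
    rw [e1, e2]
    have h24 : 24/((T:ℝ)*Δ^2) ≤ 2/3 := by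
      rw [div_le_div_iff₀ (by positivity) (by norm_num)]
      linarith
    have h6 : (0:ℝ) ≤ 6/((T:ℝ)*Δ) := by positivity
    have : 2/(Δ*(T:ℝ)) = 6/((T:ℝ)*Δ) * (1/3) := by
      field_simp
      ring
    rw [this]
    apply mul_le_mul_of_nonneg_left _ h6
    linarith
  -- exponential bound
  have hexp : Real.exp ((T:ℝ)*Δ^2/6) ≤ Real.exp K * Real.exp (-c*x^2) := by
    rw [← Real.exp_add, Real.exp_le_exp]
    have hsq : (3*Δ/4)^2 ≤ (Δ-γ)^2 := pow_le_pow_left₀ (by linarith) (by linarith) 2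
    have hsq' : (3*Δ/4)^2 ≤ (γ-Δ)^2 := by nlinarith [hsq]
    rw [hK, hc, hx]
    nlinarith [mul_le_mul_of_nonneg_left hsq' (by positivity : (0:ℝ) ≤ (T:ℝ)/3)]
  calc Real.exp ((T:ℝ)*Δ^2/6) * (2/(Δ*(T:ℝ)))
      ≤ (Real.exp K * Real.exp (-c*x^2)) * (1/(2*c*x) * (1 - 1/(2*c*x^2))) := by
        apply mul_le_mul hexp hcoeff (by positivity) (by positivity)
    _ = Real.exp K * (1/(2*c*x) * (1 - 1/(2*c*x^2)) * Real.exp (-c*x^2)) := by ring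
    _ ≤ Real.exp K * ∫ v in Set.Ioi x, Real.exp (-c*v^2) :=
        mul_le_mul_of_nonneg_left htail (Real.exp_pos _).le
    _ ≤ Real.exp K * ∫ v in Set.Ioi (γ - Δ + ε), Real.exp (-c*v^2) :=
        mul_le_mul_of_nonneg_left hmono (Real.exp_pos _).le
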